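/- arXiv:1806.10366 — 2 statements merged into one kernel-verified Lean document; each statement's English description precedes it below -/
import Mathlib

section
/- Let H ∈ ℝ, h > 0, d ≥ 2 an integer, with 1 − t·H > 0 for all t ∈ [0, h]. Then ∫_0^h (1 − t H)^{d−1} dt ≤ h − ((d−1)/2)·H·h²·(1 − h H)^{d−2}. -/
lemma aux_pow_ineq (n : ℕ) (y : ℝ) (hy : 0 ≤ y) :
    ((n : ℝ) + 1) * y ^ n - (n : ℝ) * y ^ (n + 1) ≤ 1 := by
  induction n with
  | zero => simp
  | succ n ih =>
    have hyn : 0 ≤ y ^ n := pow_nonneg hy n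
    have hkey : (1 - y) * (1 - y ^ (n + 1)) ≥ 0 := by
      rcases le_total y 1 with h1 | h1
      · have : y ^ (n + 1) ≤ 1 := pow_le_one₀ hy h1
        nlinarith
      · have : 1 ≤ y ^ (n + 1) := one_le_pow₀ h1
        nlinarith
    have hkey' : 1 - y - y ^ (n + 1) + y ^ (n + 2) ≥ 0 := by
      have e : (1 - y) * (1 - y ^ (n + 1)) = 1 - y - y ^ (n + 1) + y ^ (n + 2) := by ring
      rw [e] at hkey; linarith
    have hexp : ((n : ℝ) + 1 + 1) * y ^ (n + 1) - ((n : ℝ) + 1) * y ^ (n + 1 + 1)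
        = y * (((n : ℝ) + 1) * y ^ n - (n : ℝ) * y ^ (n + 1)) + y ^ (n + 1) - y ^ (n + 2) := by
      ring
    push_cast
    rw [hexp]
    nlinarith [mul_le_mul_of_nonneg_left ih hy]

/-- Let `H ∈ ℝ`, `h > 0`, `d ≥ 2` an integer, with `1 − t·H > 0` for all `t ∈ [0, h]`.
Then `∫_0^h (1 − tH)^{d−1} dt ≤ h − ((d−1)/2)·H·h²·(1 − hH)^{d−2}`. -/
theorem stmt6 (d : ℕ) (hd : 2 ≤ d) (H h : ℝ) (hh : 0 < h)
    (hpos : ∀ t ∈ Set.Icc (0 : ℝ) h, 0 < 1 - t * H) :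
    ∫ t in (0 : ℝ)..h, (1 - t * H) ^ (d - 1) ≤
      h - ((d : ℝ) - 1) / 2 * H * h ^ 2 * (1 - h * H) ^ (d - 2) := by
  obtain ⟨n, rfl⟩ : ∃ n, d = n + 2 := ⟨d - 2, by omega⟩
  have hy : 0 < 1 - h * H := hpos h ⟨le_of_lt hh, le_refl h⟩
  set y : ℝ := 1 - h * H with hydef
  set c : ℝ := y ^ (n + 1) with hcdef
  -- pointwise chord bound
  have chord : ∀ t ∈ Set.Icc (0 : ℝ) h,
      (1 - t * H) ^ (n + 1) ≤ 1 + t * ((c - 1) / h) := by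
    intro t ht
    obtain ⟨ht0, hth⟩ := ht
    have ha : (0:ℝ) ≤ 1 - t / h := by
      rw [sub_nonneg]; exact div_le_one_of_le₀ hth hh.le
    have hb : (0:ℝ) ≤ t / h := div_nonneg ht0 hh.le
    have hab : (1 - t / h) + t / h = 1 := by ring
    have hconv := (convexOn_pow (n + 1)).2 (Set.mem_Ici.mpr zero_le_one)
      (Set.mem_Ici.mpr hy.le) ha hb hab
    have heq : (1 - t / h) • (1:ℝ) + (t / h) • y = 1 - t * H := by
      rw [smul_eq_mul, smul_eq_mul, hydef]; linear_combination (-H) * (div_mul_cancel₀ t hh.ne' : t / h * h = t)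
    rw [heq] at hconv
    calc (1 - t * H) ^ (n + 1) ≤ (1 - t / h) * 1 ^ (n + 1) + (t / h) * y ^ (n + 1) := hconv
      _ = 1 + t * ((c - 1) / h) := by field_simp [hcdef]; ring
  -- integrate
  have hint : (∫ t in (0:ℝ)..h, (1 - t * H) ^ (n + 1)) ≤
      ∫ t in (0:ℝ)..h, (1 + t * ((c - 1) / h)) := by
    apply intervalIntegral.integral_mono_on hh.le
    · exact (Continuous.intervalIntegrable (by continuity) 0 h)
    · exact (Continuous.intervalIntegrable (by continuity) 0 h)
    · intro t ht; exact chord t ht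
  have hval : (∫ t in (0:ℝ)..h, (1 + t * ((c - 1) / h))) = h + h * (c - 1) / 2 := by
    have : (∫ t in (0:ℝ)..h, (1 + t * ((c - 1) / h)))
        = (∫ t in (0:ℝ)..h, (1:ℝ)) + (∫ t in (0:ℝ)..h, t * ((c - 1) / h)) := by
      apply intervalIntegral.integral_add
      · exact intervalIntegrable_const
      · exact (Continuous.intervalIntegrable (by continuity) 0 h)
    rw [this, intervalIntegral.integral_const, intervalIntegral.integral_mul_const,
      integral_id]
    field_simp
    ring
  -- final algebraic step
  have halg : h + h * (c - 1) / 2 ≤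
      h - ((n : ℝ) + 2 - 1) / 2 * H * h ^ 2 * y ^ n := by
    have key := aux_pow_ineq n y hy.le
    have hH' : h * H = 1 - y := by rw [hydef]; ring
    have : h * (c - 1) / 2 + ((n : ℝ) + 2 - 1) / 2 * H * h ^ 2 * y ^ n
        = h / 2 * (((n:ℝ) + 1) * y ^ n - (n:ℝ) * y ^ (n+1) - 1) := by
      rw [hcdef]
      have : ((n : ℝ) + 2 - 1) / 2 * H * h ^ 2 * y ^ n
          = ((n:ℝ) + 1) / 2 * (h * H) * h * y ^ n := by ring
      rw [this, hH']; ring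
    nlinarith [this, key]
  have hcast : ((n + 2 : ℕ) : ℝ) - 1 = (n : ℝ) + 2 - 1 := by push_cast; ring
  simp only [show n + 2 - 1 = n + 1 from rfl, show n + 2 - 2 = n from rfl, hcast]
  calc (∫ t in (0:ℝ)..h, (1 - t * H) ^ (n + 1)) ≤ h + h * (c - 1) / 2 := hval ▸ hint
    _ ≤ _ := halg
end

section
/- Let d ≥ 2 and define the classical constant C_d = 4π²·ω_d^{−2/d} with ω_d the volume of the unit ball in ℝ^d. Then the ratio 2·(2C_d/(d+2))^{1/2} / [(1/(2(d+1)))·C_d^{(d+1)/2}/C_{d−1}^{(d−1)/2}] lies in the interval [3/√2, 4/√π], and converges to 4/√π as d → ∞. -/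
open Real Filter

lemma wendel {y : ℝ} (hy : 0 < y) :
    Real.Gamma (y + 1/2) ^ 2 ≤ y * Real.Gamma y ^ 2 := by
  have h1 : (0:ℝ) < Real.Gamma y := Real.Gamma_pos_of_pos hy
  have h2 : (0:ℝ) < Real.Gamma (y + 1/2) := Real.Gamma_pos_of_pos (by linarith)
  have hc := Real.convexOn_log_Gamma.2 (Set.mem_Ioi.2 hy)
    (Set.mem_Ioi.2 (by linarith : (0:ℝ) < y + 1))
    (by norm_num : (0:ℝ) ≤ 1/2) (by norm_num : (0:ℝ) ≤ 1/2) (by norm_num)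
  simp only [smul_eq_mul, Function.comp_apply] at hc
  have he : (1/2 : ℝ) * y + (1/2 : ℝ) * (y + 1) = y + 1/2 := by ring
  rw [he, Real.Gamma_add_one (ne_of_gt hy), Real.log_mul (ne_of_gt hy) (ne_of_gt h1)] at hc
  have key : Real.log (Real.Gamma (y + 1/2) ^ 2) ≤ Real.log (y * Real.Gamma y ^ 2) := by
    rw [Real.log_pow, Real.log_mul (ne_of_gt hy) (by positivity), Real.log_pow]
    push_cast
    linarith
  exact (Real.log_le_log_iff (by positivity) (by positivity)).1 key

lemma g_three_halves : Real.Gamma (3/2) = Real.sqrt π / 2 := by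
  rw [show (3/2:ℝ) = 1/2 + 1 by norm_num, Real.Gamma_add_one (by norm_num),
    Real.Gamma_one_half_eq]; ring

lemma g_five_halves : Real.Gamma (5/2) = 3 * Real.sqrt π / 4 := by
  rw [show (5/2:ℝ) = 3/2 + 1 by norm_num, Real.Gamma_add_one (by norm_num),
    g_three_halves]; ring

lemma g_seven_halves : Real.Gamma (7/2) = 15 * Real.sqrt π / 8 := by
  rw [show (7/2:ℝ) = 5/2 + 1 by norm_num, Real.Gamma_add_one (by norm_num),
    g_five_halves]; ring

lemma upkey {x : ℝ} (hx : 2 ≤ x) :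
    (x+1)^2 * Real.Gamma ((x+1)/2)^2 ≤ 2*(x+2) * Real.Gamma ((x+2)/2)^2 := by
  have w := wendel (y := (x+2)/2) (by linarith)
  rw [show (x+2)/2 + 1/2 = (x+1)/2 + 1 by ring,
    Real.Gamma_add_one (by positivity : ((x+1)/2:ℝ) ≠ 0)] at w
  nlinarith [w]

lemma lbkey {x : ℝ} (hx : 2 ≤ x) :
    2 * Real.Gamma ((x+2)/2)^2 ≤ (x+1) * Real.Gamma ((x+1)/2)^2 := by
  have w := wendel (y := (x+1)/2) (by linarith)
  rw [show (x+1)/2 + 1/2 = (x+2)/2 by ring] at w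
  nlinarith [w]

lemma lowkey {d : ℕ} (hd : 2 ≤ d) :
    9*π*((d:ℝ)+2) * Real.Gamma (((d:ℝ)+2)/2)^2
      ≤ 16*((d:ℝ)+1)^2 * Real.Gamma (((d:ℝ)+1)/2)^2 := by
  have hπ : Real.sqrt π ^ 2 = π := Real.sq_sqrt Real.pi_pos.le
  rcases le_or_gt d 6 with h | h
  · interval_cases d
    · norm_num
      rw [g_three_halves]
      nlinarith [hπ]
    · norm_num
      rw [g_five_halves]
      nlinarith [hπ, Real.pi_lt_d2, Real.pi_pos]
    · norm_num
      rw [g_five_halves]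
      nlinarith [hπ, Real.pi_pos]
    · norm_num
      rw [g_seven_halves]
      nlinarith [hπ, Real.pi_lt_d2, Real.pi_pos]
    · norm_num [Nat.factorial]
      rw [g_seven_halves]
      nlinarith [hπ, Real.pi_pos]
  · have hx : (7:ℝ) ≤ (d:ℝ) := by exact_mod_cast h
    have lb := lbkey (x := (d:ℝ)) (by linarith)
    have hG1p : 0 < Real.Gamma (((d:ℝ)+1)/2) := Real.Gamma_pos_of_pos (by positivity)
    have h9 : (0:ℝ) ≤ 9*π*((d:ℝ)+2)/2 := by positivity
    have hint1 := mul_le_mul_of_nonneg_left lb h9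
    have hc : (0:ℝ) ≤ 32*((d:ℝ)+1) - 9*π*((d:ℝ)+2) := by nlinarith [Real.pi_lt_d2]
    have hint2 : (0:ℝ) ≤ (32*((d:ℝ)+1) - 9*π*((d:ℝ)+2)) *
        (((d:ℝ)+1) * Real.Gamma (((d:ℝ)+1)/2)^2) :=
      mul_nonneg hc (by positivity)
    nlinarith [hint1, hint2]

lemma Cval {t : ℝ} (ht : 0 < t) :
    4*π^2 * (π ^ (t/2) / Real.Gamma (1+t/2)) ^ (-(2:ℝ)/t)
      = 4*π* (Real.Gamma (1+t/2)) ^ ((2:ℝ)/t) := by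
  have hG : (0:ℝ) < Real.Gamma (1+t/2) := Real.Gamma_pos_of_pos (by positivity)
  rw [Real.div_rpow (by positivity) hG.le, ← Real.rpow_mul Real.pi_pos.le,
    show (t/2) * (-(2:ℝ)/t) = -1 by field_simp,
    show (-(2:ℝ)/t) = -((2:ℝ)/t) by ring, Real.rpow_neg hG.le,
    Real.rpow_neg_one]
  have : (0:ℝ) < Real.Gamma (1+t/2) ^ ((2:ℝ)/t) := Real.rpow_pos_of_pos hG _
  field_simp

lemma Qval {x G1 G2 : ℝ} (hx : 2 ≤ x) (h1 : 0 < G1) (h2 : 0 < G2) :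
    2 * ((2 * (4*π*G2^((2:ℝ)/x))) / (x + 2)) ^ ((1:ℝ)/2) /
      ((1 / (2 * (x + 1))) * (4*π*G2^((2:ℝ)/x)) ^ ((x+1)/2) /
        (4*π*G1^((2:ℝ)/(x-1))) ^ ((x-1)/2))
    = 2*Real.sqrt 2*(x+1)*G1/(Real.sqrt π*Real.sqrt (x+2)*G2) := by
  have hx0 : (0:ℝ) < x := by linarith
  have hx1 : (0:ℝ) < x - 1 := by linarith
  have h4π : (0:ℝ) < 4*π := by positivity
  have e1 : (2 * (4*π*G2^((2:ℝ)/x)) / (x + 2)) ^ ((1:ℝ)/2)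
      = Real.sqrt 2 * ((4*π) ^ ((1:ℝ)/2) * G2 ^ ((1:ℝ)/x)) / Real.sqrt (x+2) := by
    rw [Real.div_rpow (by positivity) (by linarith), Real.mul_rpow (by norm_num) (by positivity),
      Real.mul_rpow h4π.le (by positivity), ← Real.rpow_mul h2.le,
      show (2:ℝ)/x * (1/2) = 1/x by ring, ← Real.sqrt_eq_rpow, ← Real.sqrt_eq_rpow,
      ← Real.sqrt_eq_rpow]
  have e2 : (4*π*G2^((2:ℝ)/x)) ^ ((x+1)/2)
      = (4*π) ^ ((x-1)/2) * ((4*π) ^ ((1:ℝ)/2) * (4*π) ^ ((1:ℝ)/2)) * (G2 ^ ((1:ℝ)/x) * G2) := by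
    rw [Real.mul_rpow h4π.le (by positivity), ← Real.rpow_mul h2.le,
      show (2:ℝ)/x * ((x+1)/2) = 1/x + 1 by field_simp; ring,
      Real.rpow_add h2, Real.rpow_one, ← Real.rpow_add h4π, ← Real.rpow_add h4π,
      show (x-1)/2 + (1/2 + 1/2) = (x+1)/2 by ring]
  have e3 : (4*π*G1^((2:ℝ)/(x-1))) ^ ((x-1)/2) = (4*π) ^ ((x-1)/2) * G1 := by
    rw [Real.mul_rpow h4π.le (by positivity), ← Real.rpow_mul h1.le,
      show (2:ℝ)/(x-1) * ((x-1)/2) = 1 by field_simp, Real.rpow_one]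
  rw [e1, e2, e3]
  have hs : (4*π:ℝ) ^ ((1:ℝ)/2) = 2 * Real.sqrt π := by
    rw [← Real.sqrt_eq_rpow, show (4:ℝ)*π = 2^2*π by norm_num,
      Real.sqrt_mul (by norm_num), Real.sqrt_sq (by norm_num)]
  rw [hs]
  have hP : (0:ℝ) < (4*π) ^ ((x-1)/2) := Real.rpow_pos_of_pos h4π _
  have hG2x : (0:ℝ) < G2 ^ ((1:ℝ)/x) := Real.rpow_pos_of_pos h2 _
  have hsπ : Real.sqrt π * Real.sqrt π = π := Real.mul_self_sqrt Real.pi_pos.le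
  have hsx2 : (0:ℝ) < Real.sqrt (x+2) := Real.sqrt_pos.2 (by linarith)
  have hsπ0 : (0:ℝ) < Real.sqrt π := Real.sqrt_pos.2 Real.pi_pos
  field_simp

set_option maxHeartbeats 1000000 in
/-- Let `d ≥ 2` and define the classical constant `C_d = 4π²·ω_d^{−2/d}` with `ω_d` the
volume of the unit ball in `ℝ^d`. Then the ratio
`2·(2C_d/(d+2))^{1/2} / [(1/(2(d+1)))·C_d^{(d+1)/2}/C_{d−1}^{(d−1)/2}]` lies in the
interval `[3/√2, 4/√π]`, and converges to `4/√π` as `d → ∞`. -/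
theorem stmt17 (ω C : ℕ → ℝ)
    (hω : ∀ n : ℕ, ω n = π ^ ((n : ℝ) / 2) / Real.Gamma (1 + (n : ℝ) / 2))
    (hC : ∀ n : ℕ, C n = 4 * π ^ 2 * (ω n) ^ (-(2 : ℝ) / (n : ℝ)))
    (Q : ℕ → ℝ)
    (hQ : ∀ d : ℕ, Q d =
      2 * ((2 * C d) / ((d : ℝ) + 2)) ^ ((1 : ℝ) / 2) /
        ((1 / (2 * ((d : ℝ) + 1))) * (C d) ^ (((d : ℝ) + 1) / 2) /
          (C (d - 1)) ^ (((d : ℝ) - 1) / 2))) :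
    (∀ d : ℕ, 2 ≤ d → Q d ∈ Set.Icc (3 / Real.sqrt 2) (4 / Real.sqrt π)) ∧
    Tendsto Q atTop (nhds (4 / Real.sqrt π)) := by
  have hQf : ∀ d : ℕ, 2 ≤ d → Q d =
      2*Real.sqrt 2*((d:ℝ)+1)*Real.Gamma (((d:ℝ)+1)/2) /
        (Real.sqrt π * Real.sqrt ((d:ℝ)+2) * Real.Gamma (((d:ℝ)+2)/2)) := by
    intro d hd
    have hx : (2:ℝ) ≤ (d:ℝ) := by exact_mod_cast hd
    have hd1 : (1:ℕ) ≤ d := by omega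
    have hcast : ((d - 1 : ℕ) : ℝ) = (d:ℝ) - 1 := by
      rw [Nat.cast_sub hd1]; norm_num
    have hdpos : (0:ℝ) < (d:ℝ) := by exact_mod_cast (by omega : 0 < d)
    have hCd : C d = 4*π*(Real.Gamma (1+(d:ℝ)/2)) ^ ((2:ℝ)/(d:ℝ)) := by
      rw [hC d, hω d]; exact Cval hdpos
    have hCd1 : C (d-1) = 4*π*(Real.Gamma (1+((d:ℝ)-1)/2)) ^ ((2:ℝ)/((d:ℝ)-1)) := by
      rw [hC (d-1), hω (d-1), hcast]; exact Cval (by linarith)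
    rw [hQ d, hCd, hCd1,
      show 1+((d:ℝ)-1)/2 = ((d:ℝ)+1)/2 by ring, show 1+(d:ℝ)/2 = ((d:ℝ)+2)/2 by ring]
    exact Qval hx (Real.Gamma_pos_of_pos (by positivity))
      (Real.Gamma_pos_of_pos (by positivity))
  have hbounds : ∀ d : ℕ, 2 ≤ d →
      Real.sqrt (16*((d:ℝ)+1)/(π*((d:ℝ)+2))) ≤ Q d ∧ Q d ≤ 4 / Real.sqrt π ∧
        3 / Real.sqrt 2 ≤ Q d := by
    intro d hd
    have hx : (2:ℝ) ≤ (d:ℝ) := by exact_mod_cast hd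
    have hG1 : (0:ℝ) < Real.Gamma (((d:ℝ)+1)/2) := Real.Gamma_pos_of_pos (by positivity)
    have hG2 : (0:ℝ) < Real.Gamma (((d:ℝ)+2)/2) := Real.Gamma_pos_of_pos (by positivity)
    have hf := hQf d hd
    have hQpos : 0 < Q d := by rw [hf]; positivity
    have hsπ : Real.sqrt π ^ 2 = π := Real.sq_sqrt Real.pi_pos.le
    have hs2 : Real.sqrt 2 ^ 2 = 2 := Real.sq_sqrt (by norm_num)
    have hsx : Real.sqrt ((d:ℝ)+2) ^ 2 = (d:ℝ)+2 := Real.sq_sqrt (by positivity)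
    have hsq : Q d^2 = 8*((d:ℝ)+1)^2*Real.Gamma (((d:ℝ)+1)/2)^2 /
        (π*((d:ℝ)+2)*Real.Gamma (((d:ℝ)+2)/2)^2) := by
      rw [hf, div_pow]; simp only [mul_pow]; rw [hsπ, hs2, hsx]; ring
    have hub : Q d ≤ 4 / Real.sqrt π := by
      refine le_of_pow_le_pow_left₀ two_ne_zero (by positivity) ?_
      rw [hsq, div_pow, hsπ, div_le_div_iff₀ (by positivity) Real.pi_pos]
      nlinarith [mul_le_mul_of_nonneg_left (upkey hx) (show (0:ℝ) ≤ 8*π by positivity)]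
    have hlb9 : 9/2 ≤ Q d^2 := by
      rw [hsq, le_div_iff₀ (by positivity)]
      nlinarith [lowkey hd]
    have hlb : 3 / Real.sqrt 2 ≤ Q d := by
      refine le_of_pow_le_pow_left₀ two_ne_zero hQpos.le ?_
      rw [div_pow, hs2]
      norm_num
      linarith [hlb9]
    have hlbL : Real.sqrt (16*((d:ℝ)+1)/(π*((d:ℝ)+2))) ≤ Q d := by
      have h1 : 16*((d:ℝ)+1)/(π*((d:ℝ)+2)) ≤ Q d^2 := by
        rw [hsq, div_le_div_iff₀ (by positivity) (by positivity)]
        nlinarith [mul_le_mul_of_nonneg_left (lbkey hx)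
          (show (0:ℝ) ≤ 8*((d:ℝ)+1)*(π*((d:ℝ)+2)) by positivity)]
      calc Real.sqrt (16*((d:ℝ)+1)/(π*((d:ℝ)+2))) ≤ Real.sqrt (Q d^2) :=
            Real.sqrt_le_sqrt h1
        _ = Q d := Real.sqrt_sq hQpos.le
    exact ⟨hlbL, hub, hlb⟩
  refine ⟨fun d hd => ⟨(hbounds d hd).2.2, (hbounds d hd).2.1⟩, ?_⟩
  have hinv : Tendsto (fun d:ℕ => ((d:ℝ)+2)⁻¹) atTop (nhds 0) :=
    (tendsto_atTop_add_const_right atTop 2 tendsto_natCast_atTop_atTop).inv_tendsto_atTop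
  have h0 : Tendsto (fun d:ℕ => 16*((d:ℝ)+1)/(π*((d:ℝ)+2))) atTop (nhds (16/π)) := by
    have h1 : Tendsto (fun d:ℕ => 16/π*(1 - ((d:ℝ)+2)⁻¹)) atTop (nhds (16/π*(1-0))) :=
      tendsto_const_nhds.mul (tendsto_const_nhds.sub hinv)
    rw [sub_zero, mul_one] at h1
    refine h1.congr fun d => ?_
    have h2 : ((d:ℝ)+2) ≠ 0 := by positivity
    field_simp
    ring
  have heq : Real.sqrt (16/π) = 4 / Real.sqrt π := by
    rw [show (16:ℝ)/π = (4/Real.sqrt π)^2 by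
        rw [div_pow, Real.sq_sqrt Real.pi_pos.le]; norm_num,
      Real.sqrt_sq (by positivity)]
  have hL : Tendsto (fun d:ℕ => Real.sqrt (16*((d:ℝ)+1)/(π*((d:ℝ)+2)))) atTop
      (nhds (4 / Real.sqrt π)) := by
    have := (Real.continuous_sqrt.tendsto (16/π)).comp h0
    rw [heq] at this
    exact this
  exact tendsto_of_tendsto_of_tendsto_of_le_of_le' hL tendsto_const_nhds
    (eventually_atTop.2 ⟨2, fun d hd => (hbounds d hd).1⟩)
    (eventually_atTop.2 ⟨2, fun d hd => (hbounds d hd).2.1⟩)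
end
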